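/- arXiv:2412.15026 — 3 statements merged into one kernel-verified Lean document; each statement's English description precedes it below -/
import Mathlib

section
/- Let p ∈ (0,∞], r ∈ (0,∞), s ∈ (ℝ∖{0}) ∪ {∞} with p ≥ r, 1/p ≥ 1/s, r ≠ s, and let W be a matrix weight on ℝ^d with [W]_{p,(r,s),op} < ∞. Define 1/κ := (1/p − 1/s)/(1/r − 1/s) ∈ [0,1] and 1/ρ := 1/r − 1/s. Then for every nonzero vector v ∈ H, the scalar weight w := ‖W v‖^ρ satisfies the scalar A_κ condition with [‖Wv‖^ρ]_κ^{1/ρ} ≤ [W]_{p,(r,s),op}, i.e. sup_Q ⟨w^κ⟩_Q^{1/κ} ⟨w^{-κ'}⟩_Q^{1/κ'} ≤ [W]_{p,(r,s),op}^ρ. -/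
open MeasureTheory ENNReal

/-- The axis-parallel cube in `ℝ^d` with corner `a` and side length `ℓ`. -/
def cube {d : ℕ} (a : Fin d → ℝ) (ℓ : ℝ) : Set (Fin d → ℝ) :=
  {x | ∀ i, a i ≤ x i ∧ x i ≤ a i + ℓ}

/-- The normalized Lebesgue measure on the cube `Q = cube a ℓ` (so that integrals against it are
averages `⨍_Q`). -/
noncomputable def cubeAvg {d : ℕ} (a : Fin d → ℝ) (ℓ : ℝ) : Measure (Fin d → ℝ) :=
  (volume (cube a ℓ))⁻¹ • volume.restrict (cube a ℓ)

/-- The `L^t(ν)`-"norm" `(∫ g^t dν)^{1/t}` of an `ℝ≥0∞`-valued function, for `t ∈ (0,∞]`,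
interpreted as the essential supremum when `t = ∞`.  Applied with `ν = cubeAvg a ℓ` this is the
average `(⨍_Q g^t)^{1/t}`. -/
noncomputable def avgLp {α : Type*} [MeasurableSpace α] (ν : Measure α) (t : ℝ≥0∞)
    (g : α → ℝ≥0∞) : ℝ≥0∞ :=
  if t = ⊤ then essSup g ν else (∫⁻ x, g x ^ t.toReal ∂ν) ^ (1 / t.toReal)

/-- The two-parameter Roudenko-type characteristic
`sup_Q ( ⨍_Q ( ⨍_Q A x y ^ t dy )^{q/t} dx )^{1/q}` of a kernel `A` (typically
`A x y = ‖W(x) W(y)⁻¹‖`), with inner exponent `t` and outer exponent `q`. -/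
noncomputable def twoChar {d : ℕ} (A : (Fin d → ℝ) → (Fin d → ℝ) → ℝ≥0∞)
    (t q : ℝ≥0∞) : ℝ≥0∞ :=
  ⨆ (a : Fin d → ℝ) (ℓ : ℝ) (_ : 0 < ℓ),
    avgLp (cubeAvg a ℓ) q fun x => avgLp (cubeAvg a ℓ) t fun y => A x y

open scoped RealInnerProductSpace

section aux
variable {α : Type*} [MeasurableSpace α] {ν : Measure α}

lemma avgLp_mono_ae (e : ℝ≥0∞) {f g : α → ℝ≥0∞} (h : f ≤ᵐ[ν] g) :
    avgLp ν e f ≤ avgLp ν e g := by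
  unfold avgLp
  split_ifs
  · exact essSup_mono_ae h
  · exact ENNReal.rpow_le_rpow
      (lintegral_mono_ae (h.mono fun x hx => ENNReal.rpow_le_rpow hx ENNReal.toReal_nonneg))
      (by positivity)

lemma avgLp_const_mul (e : ℝ≥0∞) (he : e ≠ 0) (c : ℝ≥0∞) {f : α → ℝ≥0∞}
    (hf : AEMeasurable f ν) :
    avgLp ν e (fun x => c * f x) = c * avgLp ν e f := by
  unfold avgLp
  split_ifs with h
  · exact ENNReal.essSup_const_mul
  · have hp : 0 < e.toReal := ENNReal.toReal_pos he h
    simp_rw [ENNReal.mul_rpow_of_nonneg _ _ hp.le]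
    rw [lintegral_const_mul'' _ (hf.pow_const _),
      ENNReal.mul_rpow_of_nonneg _ _ (by positivity : (0:ℝ) ≤ 1 / e.toReal),
      ← ENNReal.rpow_mul, mul_one_div_cancel hp.ne', ENNReal.rpow_one]

lemma avgLp_rpow (e e2 : ℝ≥0∞) (he : e ≠ 0) {ρ : ℝ} (hρ : 0 < ρ)
    (h2 : e2 = e * ENNReal.ofReal ρ) (f : α → ℝ≥0∞) :
    avgLp ν e (fun x => f x ^ ρ) = avgLp ν e2 f ^ ρ := by
  have hρ0 : ENNReal.ofReal ρ ≠ 0 := by simp [hρ]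
  by_cases h : e = ⊤
  · have h2' : e2 = ⊤ := by rw [h2, h, top_mul hρ0]
    rw [avgLp, avgLp, if_pos h, if_pos h2']
    exact (OrderIso.essSup_apply f ν (ENNReal.orderIsoRpow ρ hρ)).symm
  · have h2top : e2 ≠ ⊤ := by
      rw [h2]; exact ENNReal.mul_ne_top h ENNReal.ofReal_ne_top
    have hE : 0 < e.toReal := ENNReal.toReal_pos he h
    have hte : e2.toReal = e.toReal * ρ := by
      rw [h2, ENNReal.toReal_mul, ENNReal.toReal_ofReal hρ.le]
    rw [avgLp, avgLp, if_neg h, if_neg h2top]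
    have hpt : ∀ x : α, (f x ^ ρ) ^ e.toReal = f x ^ e2.toReal := fun x => by
      rw [← ENNReal.rpow_mul, hte, mul_comm]
    simp_rw [hpt]
    rw [← ENNReal.rpow_mul]
    congr 1
    rw [hte]
    field_simp

end aux

/-- **Scalar Muckenhoupt weights from a two-parameter matrix Muckenhoupt weight.**
Let `p ∈ (0,∞]`, `r ∈ (0,∞)`, `s ∈ (ℝ∖{0}) ∪ {∞}` with `p ≥ r`, `1/p ≥ 1/s`, `r ≠ s` (encoded
through reciprocals `ip = 1/p`, `ir = 1/r`, `σ = 1/s` and exponents `1/t = 1/r − 1/p`,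
`1/q = 1/p − 1/s`), and let `W` be a matrix weight with `[W]_{p,(r,s),op} < ∞`.  Define
`1/κ = (1/p − 1/s)/(1/r − 1/s) ∈ [0,1]` and `1/ρ = 1/r − 1/s`.  Then for every nonzero `v`, the
scalar weight `w = ‖W v‖^ρ` satisfies the `A_κ` condition
`sup_Q ⟨w^κ⟩_Q^{1/κ} ⟨w^{−κ'}⟩_Q^{1/κ'} ≤ [W]_{p,(r,s),op}^ρ`. -/
theorem scalar_Ap_from_twoChar {d : ℕ} {V : Type*} [NormedAddCommGroup V]
    [InnerProductSpace ℝ V] [FiniteDimensional ℝ V]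
    (ir σ ip : ℝ) (hr : 0 < ir) (h0 : 0 ≤ ip) (h1 : ip ≤ ir) (h2 : σ ≤ ip) (hne : ir ≠ σ)
    (t q κ κ' : ℝ≥0∞)
    (ht : t⁻¹ = ENNReal.ofReal (ir - ip)) (hq : q⁻¹ = ENNReal.ofReal (ip - σ))
    (hκ : κ⁻¹ = ENNReal.ofReal ((ip - σ) / (ir - σ)))
    (hκ' : κ⁻¹ + κ'⁻¹ = 1)
    (ρ : ℝ) (hρ : ρ = (ir - σ)⁻¹)
    (W Winv : (Fin d → ℝ) → (V →L[ℝ] V))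
    (hWm : StronglyMeasurable W) (hWim : StronglyMeasurable Winv)
    (hsa : ∀ᵐ x : Fin d → ℝ, ∀ u v : V, ⟪W x u, v⟫ = ⟪u, W x v⟫)
    (hpos : ∀ᵐ x : Fin d → ℝ, ∀ u : V, u ≠ 0 → 0 < ⟪W x u, u⟫)
    (hinv : ∀ᵐ x : Fin d → ℝ, (Winv x).comp (W x) = ContinuousLinearMap.id ℝ V ∧
      (W x).comp (Winv x) = ContinuousLinearMap.id ℝ V)
    (hfin : twoChar (fun x y => (‖(W x).comp (Winv y)‖₊ : ℝ≥0∞)) t q < ⊤) :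
    ∀ v : V, v ≠ 0 → ∀ (a : Fin d → ℝ) (ℓ : ℝ), 0 < ℓ →
      avgLp (cubeAvg a ℓ) κ (fun x => (‖W x v‖₊ : ℝ≥0∞) ^ ρ) *
        avgLp (cubeAvg a ℓ) κ' (fun x => ((‖W x v‖₊ : ℝ≥0∞) ^ ρ)⁻¹)
        ≤ (twoChar (fun x y => (‖(W x).comp (Winv y)‖₊ : ℝ≥0∞)) t q) ^ ρ := by
  intro v hv a ℓ hℓ
  set ν : Measure (Fin d → ℝ) := cubeAvg a ℓ with hν
  set A : (Fin d → ℝ) → (Fin d → ℝ) → ℝ≥0∞ :=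
    fun x y => (‖(W x).comp (Winv y)‖₊ : ℝ≥0∞) with hA
  set h : (Fin d → ℝ) → ℝ≥0∞ := fun x => (‖W x v‖₊ : ℝ≥0∞) with hh
  -- basic real arithmetic
  have hδ : 0 < ir - σ := lt_of_le_of_ne (by linarith) (fun hc => hne (by linarith))
  have hρpos : 0 < ρ := by rw [hρ]; positivity
  have hρtop : ENNReal.ofReal ρ ≠ ⊤ := ENNReal.ofReal_ne_top
  have hρ0 : ENNReal.ofReal ρ ≠ 0 := by simp [hρpos]
  have hρinv : (ENNReal.ofReal ρ)⁻¹ = ENNReal.ofReal (ir - σ) := by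
    rw [← ENNReal.ofReal_inv_of_pos hρpos, hρ, inv_inv]
  -- nonvanishing of exponents
  have ht0 : t ≠ 0 := ENNReal.inv_ne_top.mp (by rw [ht]; exact ENNReal.ofReal_ne_top)
  have hq0 : q ≠ 0 := ENNReal.inv_ne_top.mp (by rw [hq]; exact ENNReal.ofReal_ne_top)
  have hκ0 : κ ≠ 0 := ENNReal.inv_ne_top.mp (by rw [hκ]; exact ENNReal.ofReal_ne_top)
  have hκtop : κ⁻¹ ≠ ⊤ := by rw [hκ]; exact ENNReal.ofReal_ne_top
  -- κ'⁻¹ = (ir - ip)/(ir - σ)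
  have hκ'inv : κ'⁻¹ = ENNReal.ofReal ((ir - ip) / (ir - σ)) := by
    have hsum : κ⁻¹ + ENNReal.ofReal ((ir - ip) / (ir - σ)) = 1 := by
      rw [hκ, ← ENNReal.ofReal_add (div_nonneg (by linarith) hδ.le) (div_nonneg (by linarith) hδ.le),
        ← add_div, show ip - σ + (ir - ip) = ir - σ by ring, div_self hδ.ne',
        ENNReal.ofReal_one]
    exact (ENNReal.add_right_inj hκtop).mp (hκ'.trans hsum.symm)
  have hκ'0 : κ' ≠ 0 := ENNReal.inv_ne_top.mp (by rw [hκ'inv]; exact ENNReal.ofReal_ne_top)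
  -- q = κ * ofReal ρ and t = κ' * ofReal ρ
  have key_exp : ∀ e e' : ℝ≥0∞, ∀ c : ℝ, 0 ≤ c → e⁻¹ = ENNReal.ofReal c →
      e'⁻¹ = ENNReal.ofReal (c / (ir - σ)) → e = e' * ENNReal.ofReal ρ := by
    intro e e' c hc hce hce'
    have : e⁻¹ = (e' * ENNReal.ofReal ρ)⁻¹ := by
      rw [ENNReal.mul_inv (Or.inr hρtop) (Or.inr hρ0), hce, hce', hρinv,
        ← ENNReal.ofReal_mul (by positivity), div_mul_cancel₀ _ hδ.ne']
    rw [← inv_inv e, this, inv_inv]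
  have hqκ : q = κ * ENNReal.ofReal ρ := key_exp q κ (ip - σ) (by linarith) hq hκ
  have htκ' : t = κ' * ENNReal.ofReal ρ := key_exp t κ' (ir - ip) (by linarith) ht hκ'inv
  -- measurability
  have hmeas : Measurable h := (_root_.StronglyMeasurable.apply_continuousLinearMap hWm v).nnnorm.measurable.coe_nnreal_ennreal
  -- absolute continuity of ν w.r.t. volume
  have hac : ν ≪ (volume : Measure (Fin d → ℝ)) := by
    refine Measure.AbsolutelyContinuous.mk fun s hs h0 => ?_
    have h1' : volume (s ∩ cube a ℓ) = 0 :=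
      le_antisymm (h0 ▸ measure_mono Set.inter_subset_left) (by simp)
    simp [hν, cubeAvg, Measure.smul_apply, Measure.restrict_apply hs, h1']
  have hposν : ∀ᵐ y ∂ν, ∀ u : V, u ≠ 0 → 0 < ⟪W y u, u⟫ := hpos.filter_mono hac.ae_le
  have hinvν : ∀ᵐ y ∂ν, (Winv y).comp (W y) = ContinuousLinearMap.id ℝ V ∧
      (W y).comp (Winv y) = ContinuousLinearMap.id ℝ V := hinv.filter_mono hac.ae_le
  -- pointwise lower bound for the kernel
  have key : ∀ x, (fun y => h x * (h y)⁻¹) ≤ᵐ[ν] fun y => A x y := by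
    intro x
    filter_upwards [hinvν, hposν] with y hy1 hy2
    have hWyv : W y v ≠ 0 := by
      intro hc
      have := hy2 v hv
      rw [hc] at this
      simp at this
    have hvy : (Winv y) (W y v) = v := by
      have := congrArg (fun T : V →L[ℝ] V => T v) hy1.1
      simpa using this
    have hle : ‖W x v‖₊ ≤ ‖(W x).comp (Winv y)‖₊ * ‖W y v‖₊ := by
      have hxy : W x v = ((W x).comp (Winv y)) (W y v) := by
        rw [ContinuousLinearMap.comp_apply, hvy]
      calc ‖W x v‖₊ = ‖((W x).comp (Winv y)) (W y v)‖₊ := by rw [← hxy]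
        _ ≤ ‖(W x).comp (Winv y)‖₊ * ‖W y v‖₊ :=
            ContinuousLinearMap.le_opNNNorm _ _
    have hy0 : h y ≠ 0 := by
      simp only [hh, ne_eq, ENNReal.coe_eq_zero, nnnorm_eq_zero]
      exact hWyv
    have hytop : h y ≠ ⊤ := ENNReal.coe_ne_top
    calc h x * (h y)⁻¹ ≤ (A x y * h y) * (h y)⁻¹ := by
          have hcoe : h x ≤ A x y * h y := by
            simp only [hh, hA, ← ENNReal.coe_mul]
            exact_mod_cast hle
          gcongr
      _ = A x y := by rw [mul_assoc, ENNReal.mul_inv_cancel hy0 hytop, mul_one]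
  -- the two averages
  set C1 : ℝ≥0∞ := avgLp ν q h with hC1
  set C2 : ℝ≥0∞ := avgLp ν t (fun y => (h y)⁻¹) with hC2
  have inner_le : ∀ x, h x * C2 ≤ avgLp ν t (fun y => A x y) := by
    intro x
    rw [hC2, ← avgLp_const_mul t ht0 (h x) (f := fun y => (h y)⁻¹) (hmeas.inv.aemeasurable)]
    exact avgLp_mono_ae t (key x)
  have step2 : C2 * C1 ≤ avgLp ν q (fun x => avgLp ν t (fun y => A x y)) := by
    calc C2 * C1 = avgLp ν q (fun x => C2 * h x) :=
          (avgLp_const_mul q hq0 C2 hmeas.aemeasurable).symm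
      _ = avgLp ν q (fun x => h x * C2) := by simp_rw [mul_comm]
      _ ≤ _ := avgLp_mono_ae q (Filter.Eventually.of_forall inner_le)
  have step3 : avgLp ν q (fun x => avgLp ν t (fun y => A x y)) ≤ twoChar A t q :=
    le_iSup_of_le a (le_iSup_of_le ℓ (le_iSup_of_le hℓ le_rfl))
  -- rewrite the left-hand side
  have e1 : avgLp ν κ (fun x => h x ^ ρ) = C1 ^ ρ :=
    avgLp_rpow κ q hκ0 hρpos hqκ h
  have e2 : avgLp ν κ' (fun x => (h x ^ ρ)⁻¹) = C2 ^ ρ := by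
    have hfun : (fun x => (h x ^ ρ)⁻¹) = fun x => (h x)⁻¹ ^ ρ :=
      funext fun x => (ENNReal.inv_rpow _ _).symm
    rw [hfun]
    exact avgLp_rpow κ' t hκ'0 hρpos htκ' fun x => (h x)⁻¹
  calc avgLp ν κ (fun x => h x ^ ρ) * avgLp ν κ' (fun x => (h x ^ ρ)⁻¹)
      = C1 ^ ρ * C2 ^ ρ := by rw [e1, e2]
    _ = (C1 * C2) ^ ρ := (ENNReal.mul_rpow_of_nonneg _ _ hρpos.le).symm
    _ ≤ (twoChar A t q) ^ ρ := by
        refine ENNReal.rpow_le_rpow ?_ hρpos.le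
        rw [mul_comm]
        exact step2.trans step3
end

section
/- Let p⃗ ∈ (0,∞]^m, r⃗ ∈ (0,∞)^m, s ∈ (ℝ∖{0}) ∪ {∞} with p⃗ ≥ r⃗ and 1/p ≥ 1/s, where 1/p = Σ_j 1/p_j and 1/r = Σ_j 1/r_j. If W⃗ is an m-tuple of matrix weights with [W⃗]_{p⃗,(r⃗,s),op} < ∞, then the tensor product weight W = ⊗_j W_j satisfies [W]_{p,(r,s),op} ≤ [W⃗]_{p⃗,(r⃗,s),op}. -/
open MeasureTheory ENNReal

/-- The multilinear two-parameter Roudenko-type characteristic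
`sup_Q ( ⨍_Q ∏_j ( ⨍_Q A_j x y ^ t_j dy )^{q/t_j} dx )^{1/q}`, with
`A_j x y = ‖W_j(x) W_j(y)⁻¹‖`. -/
noncomputable def multiChar {d m : ℕ} (A : Fin m → (Fin d → ℝ) → (Fin d → ℝ) → ℝ≥0∞)
    (t : Fin m → ℝ≥0∞) (q : ℝ≥0∞) : ℝ≥0∞ :=
  ⨆ (a : Fin d → ℝ) (ℓ : ℝ) (_ : 0 < ℓ),
    avgLp (cubeAvg a ℓ) q fun x => ∏ j, avgLp (cubeAvg a ℓ) (t j) fun y => A j x y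

open Finset

private lemma avgLp_mono {α : Type*} [MeasurableSpace α] (ν : Measure α) (t : ℝ≥0∞)
    {f g : α → ℝ≥0∞} (h : ∀ x, f x ≤ g x) : avgLp ν t f ≤ avgLp ν t g := by
  unfold avgLp
  split
  · exact essSup_mono_ae (.of_forall h)
  · exact ENNReal.rpow_le_rpow
      (lintegral_mono fun x => ENNReal.rpow_le_rpow (h x) ENNReal.toReal_nonneg)
      (by positivity)

private lemma avgLp_prod_le {α : Type*} [MeasurableSpace α] (ν : Measure α) {m : ℕ}
    (g : Fin m → α → ℝ≥0∞) (hg : ∀ j, Measurable (g j))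
    (t : Fin m → ℝ≥0∞) (ht : ∀ j, (t j)⁻¹ ≠ ⊤)
    (tt : ℝ≥0∞) (htt : tt⁻¹ = ∑ j, (t j)⁻¹) :
    avgLp ν tt (fun y => ∏ j, g j y) ≤ ∏ j, avgLp ν (t j) (g j) := by
  classical
  have htt' : tt⁻¹ ≠ ⊤ := by rw [htt]; exact ENNReal.sum_ne_top.2 fun j _ => ht j
  have htt0 : tt ≠ 0 := by
    intro h; rw [h, ENNReal.inv_zero] at htt'; exact htt' rfl
  have ht0 : ∀ j, t j ≠ 0 := by
    intro j h; exact ht j (by rw [h, ENNReal.inv_zero])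
  rcases eq_or_ne tt ⊤ with hT | hT
  · -- all t j = ⊤, everything is essSup
    have hall : ∀ j, t j = ⊤ := by
      intro j
      have h0 : (∑ j, (t j)⁻¹) = 0 := by rw [← htt, hT, ENNReal.inv_top]
      have := (Finset.sum_eq_zero_iff.1 h0) j (mem_univ j)
      simpa [ENNReal.inv_eq_zero] using this
    simp only [avgLp, hT, if_true, hall, if_true]
    refine essSup_le_of_ae_le _ ?_
    have hae : ∀ᵐ y ∂ν, ∀ j, g j y ≤ essSup (g j) ν :=
      (ae_all_iff).2 fun j => ae_le_essSup (g j)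
    filter_upwards [hae] with y hy
    exact Finset.prod_le_prod' fun j _ => hy j
  · -- main case
    set τ := tt.toReal with hτdef
    have hτ : 0 < τ := ENNReal.toReal_pos htt0 hT
    set S : Finset (Fin m) := univ.filter (fun j => t j ≠ ⊤) with hSdef
    have hτj : ∀ j ∈ S, 0 < (t j).toReal := by
      intro j hj
      exact ENNReal.toReal_pos (ht0 j) (by simpa [hSdef] using hj)
    -- sum of reciprocals over S
    have hsum : ∑ j ∈ S, ((t j).toReal)⁻¹ = τ⁻¹ := by
      have h1 : τ⁻¹ = (tt⁻¹).toReal := (ENNReal.toReal_inv tt).symm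
      rw [h1, htt, ENNReal.toReal_sum (fun j _ => ht j)]
      rw [← Finset.sum_filter_add_sum_filter_not univ (fun j => t j ≠ ⊤)
        (fun j => ((t j)⁻¹).toReal)]
      have h2 : ∑ j ∈ univ.filter (fun j => ¬ t j ≠ ⊤), ((t j)⁻¹).toReal = 0 := by
        refine Finset.sum_eq_zero fun j hj => ?_
        have : t j = ⊤ := by simpa using (Finset.mem_filter.1 hj).2
        simp [this]
      rw [h2, add_zero]
      exact (Finset.sum_congr rfl fun j _ => by rw [ENNReal.toReal_inv]).symm
    set p : Fin m → ℝ := fun j => τ / (t j).toReal with hpdef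
    have hpsum : ∑ j ∈ S, p j = 1 := by
      simp only [hpdef, div_eq_mul_inv, ← Finset.mul_sum, hsum]
      exact mul_inv_cancel₀ hτ.ne'
    have hpnn : ∀ j ∈ S, 0 ≤ p j := fun j hj => by positivity
    set C : ℝ≥0∞ := ∏ j ∈ univ.filter (fun j => ¬ t j ≠ ⊤), essSup (g j) ν with hCdef
    -- pointwise a.e. bound
    have hae : ∀ᵐ y ∂ν, (∏ j, g j y) ^ τ ≤ C ^ τ * (∏ j ∈ S, g j y) ^ τ := by
      have h1 : ∀ᵐ y ∂ν, ∀ j, g j y ≤ essSup (g j) ν :=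
        (ae_all_iff).2 fun j => ae_le_essSup (g j)
      filter_upwards [h1] with y hy
      have h2 : (∏ j, g j y) = (∏ j ∈ S, g j y) * ∏ j ∈ univ.filter (fun j => ¬ t j ≠ ⊤), g j y :=
        (Finset.prod_filter_mul_prod_filter_not univ _ _).symm
      have h3 : (∏ j ∈ univ.filter (fun j => ¬ t j ≠ ⊤), g j y) ≤ C :=
        Finset.prod_le_prod' fun j _ => hy j
      calc (∏ j, g j y) ^ τ ≤ ((∏ j ∈ S, g j y) * C) ^ τ := by
            refine ENNReal.rpow_le_rpow ?_ hτ.le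
            rw [h2]; exact mul_le_mul_right h3 _
        _ = C ^ τ * (∏ j ∈ S, g j y) ^ τ := by
            rw [ENNReal.mul_rpow_of_nonneg _ _ hτ.le, mul_comm]
    -- Hölder over S
    have hholder : ∫⁻ y, (∏ j ∈ S, g j y) ^ τ ∂ν
        ≤ ∏ j ∈ S, (∫⁻ y, g j y ^ (t j).toReal ∂ν) ^ p j := by
      have heq : ∀ y, (∏ j ∈ S, g j y) ^ τ = ∏ j ∈ S, (g j y ^ (t j).toReal) ^ p j := by
        intro y
        rw [← ENNReal.prod_rpow_of_nonneg hτ.le]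
        refine Finset.prod_congr rfl fun j hj => ?_
        have hh : (t j).toReal * p j = τ := by
          simp only [hpdef]; rw [mul_comm, div_mul_cancel₀ _ (hτj j hj).ne']
        rw [← ENNReal.rpow_mul, hh]
      simp only [heq]
      exact ENNReal.lintegral_prod_norm_pow_le S
        (fun j _ => ((hg j).pow_const _).aemeasurable) hpsum hpnn
    -- put together
    have hCmeas : Measurable fun y => (∏ j ∈ S, g j y) ^ τ :=
      (Finset.measurable_prod S fun j _ => hg j).pow_const τ
    have hmain : ∫⁻ y, (∏ j, g j y) ^ τ ∂ν
        ≤ C ^ τ * ∏ j ∈ S, (∫⁻ y, g j y ^ (t j).toReal ∂ν) ^ p j := by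
      calc ∫⁻ y, (∏ j, g j y) ^ τ ∂ν ≤ ∫⁻ y, C ^ τ * (∏ j ∈ S, g j y) ^ τ ∂ν :=
            lintegral_mono_ae hae
        _ = C ^ τ * ∫⁻ y, (∏ j ∈ S, g j y) ^ τ ∂ν := lintegral_const_mul _ hCmeas
        _ ≤ _ := mul_le_mul_right hholder _
    have hτinv : 0 ≤ 1 / τ := by positivity
    have hfinal : avgLp ν tt (fun y => ∏ j, g j y)
        ≤ C * ∏ j ∈ S, (∫⁻ y, g j y ^ (t j).toReal ∂ν) ^ (1 / (t j).toReal) := by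
      rw [avgLp, if_neg hT]
      calc (∫⁻ y, (∏ j, g j y) ^ τ ∂ν) ^ (1 / τ)
          ≤ (C ^ τ * ∏ j ∈ S, (∫⁻ y, g j y ^ (t j).toReal ∂ν) ^ p j) ^ (1 / τ) :=
            ENNReal.rpow_le_rpow hmain hτinv
        _ = (C ^ τ) ^ (1 / τ) *
            (∏ j ∈ S, (∫⁻ y, g j y ^ (t j).toReal ∂ν) ^ p j) ^ (1 / τ) :=
            ENNReal.mul_rpow_of_nonneg _ _ hτinv
        _ = C * ∏ j ∈ S, (∫⁻ y, g j y ^ (t j).toReal ∂ν) ^ (1 / (t j).toReal) := by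
            congr 1
            · rw [← ENNReal.rpow_mul, mul_one_div, div_self hτ.ne', ENNReal.rpow_one]
            · rw [← ENNReal.prod_rpow_of_nonneg hτinv]
              refine Finset.prod_congr rfl fun j hj => ?_
              rw [← ENNReal.rpow_mul]
              congr 1
              simp only [hpdef]
              field_simp
    refine hfinal.trans (le_of_eq ?_)
    rw [← Finset.prod_filter_mul_prod_filter_not univ (fun j => t j ≠ ⊤)
      (fun j => avgLp ν (t j) (g j)), mul_comm C _]
    congr 1
    · refine (Finset.prod_congr rfl fun j hj => ?_).symm
      have : t j ≠ ⊤ := by simpa [hSdef] using hj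
      rw [avgLp, if_neg this]
    · refine Finset.prod_congr rfl fun j hj => ?_
      have : t j = ⊤ := by simpa using (Finset.mem_filter.1 hj).2
      rw [avgLp, if_pos this]

open scoped RealInnerProductSpace

/-- **The tensor product weight inherits the linear two-parameter Muckenhoupt condition.**
Let `p⃗ ∈ (0,∞]^m`, `r⃗ ∈ (0,∞)^m`, `s ∈ (ℝ∖{0}) ∪ {∞}` with `p⃗ ≥ r⃗` and `1/p ≥ 1/s` (encoded
through reciprocals `ip_j = 1/p_j`, `ir_j = 1/r_j`, `σ = 1/s`, with `1/t_j = 1/r_j − 1/p_j`,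
`1/t = Σ_j 1/t_j` and `1/q = Σ_j 1/p_j − 1/s`).  Then the tensor product weight `⊗_j W_j`
— whose kernel `‖(⊗W_j)(x) (⊗W_j)(y)⁻¹‖` is `∏_j ‖W_j(x)W_j(y)⁻¹‖` — satisfies
`[⊗W_j]_{p,(r,s),op} ≤ [W⃗]_{p⃗,(r⃗,s),op}`. -/
theorem tensor_twoChar_le_multiChar {d m : ℕ} (hm : 0 < m)
    (V : Fin m → Type*) [∀ j, NormedAddCommGroup (V j)]
    [∀ j, InnerProductSpace ℝ (V j)] [∀ j, FiniteDimensional ℝ (V j)]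
    (ir ip : Fin m → ℝ) (σ : ℝ)
    (hr : ∀ j, 0 < ir j) (h0 : ∀ j, 0 ≤ ip j) (h1 : ∀ j, ip j ≤ ir j) (h2 : σ ≤ ∑ j, ip j)
    (t : Fin m → ℝ≥0∞) (ht : ∀ j, (t j)⁻¹ = ENNReal.ofReal (ir j - ip j))
    (tt q : ℝ≥0∞) (htt : tt⁻¹ = ∑ j, (t j)⁻¹)
    (hq : q⁻¹ = ENNReal.ofReal ((∑ j, ip j) - σ))
    (W Winv : ∀ j, (Fin d → ℝ) → (V j →L[ℝ] V j))
    (hWm : ∀ j, StronglyMeasurable (W j)) (hWim : ∀ j, StronglyMeasurable (Winv j))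
    (hsa : ∀ j, ∀ᵐ x : Fin d → ℝ, ∀ u v : V j, ⟪W j x u, v⟫ = ⟪u, W j x v⟫)
    (hpos : ∀ j, ∀ᵐ x : Fin d → ℝ, ∀ u : V j, u ≠ 0 → 0 < ⟪W j x u, u⟫)
    (hinv : ∀ j, ∀ᵐ x : Fin d → ℝ,
      (Winv j x).comp (W j x) = ContinuousLinearMap.id ℝ (V j) ∧
      (W j x).comp (Winv j x) = ContinuousLinearMap.id ℝ (V j)) :
    twoChar (fun x y => ∏ j, (‖(W j x).comp (Winv j y)‖₊ : ℝ≥0∞)) tt q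
      ≤ multiChar (fun j x y => (‖(W j x).comp (Winv j y)‖₊ : ℝ≥0∞)) t q := by
  have meas : ∀ (j : Fin m) (x : Fin d → ℝ),
      Measurable fun y => (‖(W j x).comp (Winv j y)‖₊ : ℝ≥0∞) := by
    intro j x
    have hsm : StronglyMeasurable fun y => (W j x).comp (Winv j y) :=
      (ContinuousLinearMap.compL ℝ (V j) (V j) (V j) (W j x)).continuous.comp_stronglyMeasurable
        (hWim j)
    exact hsm.measurable.nnnorm.coe_nnreal_ennreal
  unfold twoChar multiChar
  refine iSup_mono fun a => iSup_mono fun ℓ => iSup_mono fun hℓ => ?_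
  refine avgLp_mono _ _ fun x => ?_
  exact avgLp_prod_le _ _ (fun j => meas j x) t
    (fun j => by rw [ht j]; exact ENNReal.ofReal_ne_top) tt htt
end

section
/- Let S be an η-sparse family of cubes in ℝ^d for some 0 < η < 1 and let F_j ∈ L¹_c(ℝ^d; K(H_j)) for j = 1,…,m (compactly supported, integrably bounded convex-set valued maps). Then for a.e. x ∈ ℝ^d, the Minkowski sum Σ_{Q∈S} K( ⊗_{j=1}^m ⟨F_j⟩_Q ) 1_Q(x) is a well-defined bounded, convex, symmetric subset of ⊗_j H_j; equivalently, Σ_{Q∈S} ∏_{j=1}^m ‖⟨F_j⟩_Q‖ 1_Q(x) < ∞ for a.e. x. -/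
open MeasureTheory ENNReal

/-- The smallest closed convex symmetric set containing `S` (real scalars). -/
def symmHull {E : Type*} [NormedAddCommGroup E] [NormedSpace ℝ E] (S : Set E) : Set E :=
  closure (convexHull ℝ (S ∪ -S))

/-- The Aumann average `⟨F⟩_Q` of a set-valued map over a set `Q`: all averages of integrable
selections of `F` on `Q`. -/
def aumAvg {d : ℕ} {E : Type*} [NormedAddCommGroup E] [NormedSpace ℝ E]
    (Q : Set (Fin d → ℝ)) (F : (Fin d → ℝ) → Set E) : Set E :=
  {v | ∃ f : (Fin d → ℝ) → E, IntegrableOn f Q volume ∧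
    (∀ᵐ x ∂volume.restrict Q, f x ∈ F x) ∧ v = (volume Q).toReal⁻¹ • ∫ x in Q, f x}

/-- The elementary tensor map `(u_1,…,u_m) ↦ u_1 ⊗ ⋯ ⊗ u_m`, realized in coordinates on
`EuclideanSpace ℝ (∀ j, ι j) ≅ ⨂_j EuclideanSpace ℝ (ι j)`. -/
def tensVec {m : ℕ} {ι : Fin m → Type*} [∀ j, Fintype (ι j)]
    (u : ∀ j, EuclideanSpace ℝ (ι j)) : EuclideanSpace ℝ (∀ j, ι j) :=
  WithLp.toLp 2 (fun k => ∏ j, u j (k j))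

/-- The set of elementary tensors `⊗_j S_j` of an `m`-tuple of sets. -/
def tensSet {m : ℕ} {ι : Fin m → Type*} [∀ j, Fintype (ι j)]
    (S : ∀ j, Set (EuclideanSpace ℝ (ι j))) : Set (EuclideanSpace ℝ (∀ j, ι j)) :=
  {v | ∃ u : ∀ j, EuclideanSpace ℝ (ι j), (∀ j, u j ∈ S j) ∧ v = tensVec u}

/-- The Kronecker (tensor) product of the square matrices `M j`. -/
def kron {m : ℕ} {ι : Fin m → Type*} (M : ∀ j, Matrix (ι j) (ι j) ℝ) :
    Matrix (∀ j, ι j) (∀ j, ι j) ℝ :=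
  Matrix.of fun k l => ∏ j, M j (k j) (l j)

lemma cube_eq_pi {d : ℕ} (a : Fin d → ℝ) (ℓ : ℝ) :
    cube a ℓ = Set.univ.pi fun i => Set.Icc (a i) (a i + ℓ) := by
  ext x; simp [cube, Set.mem_pi, Pi.le_def, forall_and]

lemma measurableSet_cube {d : ℕ} (a : Fin d → ℝ) (ℓ : ℝ) : MeasurableSet (cube a ℓ) := by
  rw [cube_eq_pi]; exact MeasurableSet.univ_pi fun i => measurableSet_Icc

lemma volume_cube {d : ℕ} (a : Fin d → ℝ) (ℓ : ℝ) :
    volume (cube a ℓ) = ENNReal.ofReal ℓ ^ d := by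
  rw [cube_eq_pi, volume_pi_pi]
  simp [Real.volume_Icc]

lemma aumAvg_norm_bound {d : ℕ} {E : Type*} [NormedAddCommGroup E] [NormedSpace ℝ E]
    (Q : Set (Fin d → ℝ)) (F : (Fin d → ℝ) → Set E) :
    (⨆ v ∈ aumAvg Q F, (‖v‖₊ : ℝ≥0∞)) ≤
      (volume Q)⁻¹ * ∫⁻ x in Q, ⨆ u ∈ F x, (‖u‖₊ : ℝ≥0∞) := by
  refine iSup₂_le fun v hv => ?_
  obtain ⟨f, hfi, hfm, rfl⟩ := hv
  have h1 : (‖(volume Q).toReal⁻¹ • ∫ x in Q, f x‖₊ : ℝ≥0∞)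
      = ENNReal.ofReal (volume Q).toReal⁻¹ * ‖∫ x in Q, f x‖₊ := by
    rw [nnnorm_smul]
    push_cast
    congr 1
    rw [← Real.enorm_eq_ofReal (by positivity)]; rfl
  rw [h1]
  have h2 : ENNReal.ofReal (volume Q).toReal⁻¹ ≤ (volume Q)⁻¹ := by
    rcases eq_or_ne (volume Q) 0 with h | h
    · simp [h]
    · rw [← ENNReal.ofReal_toReal (a := (volume Q)⁻¹) (by simp [h]),
        ENNReal.toReal_inv]
  refine mul_le_mul' h2 ?_
  refine le_trans (enorm_integral_le_lintegral_enorm _) (lintegral_mono_ae ?_)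
  filter_upwards [hfm] with x hx
  exact le_iSup₂ (f := fun u (_ : u ∈ F x) => (‖u‖₊ : ℝ≥0∞)) (f x) hx

/-- **The multilinear convex body sparse operator is well defined** (Lemma 6.3).
Let `S = (Q_i)_{i}` be an `η`-sparse family of cubes in `ℝ^d` (there are pairwise disjoint
measurable sets `E_i ⊆ Q_i` with `|E_i| ≥ η|Q_i|`), and let `F_j ∈ L¹_c(ℝ^d; K(H_j))` be
compactly supported integrably bounded convex-set valued maps.  Then for a.e. `x ∈ ℝ^d` the
Minkowski sum `Σ_i K(⊗_j ⟨F_j⟩_{Q_i}) 1_{Q_i}(x)` is a well-defined bounded convex symmetric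
set; equivalently, `Σ_i ∏_j ‖⟨F_j⟩_{Q_i}‖ 1_{Q_i}(x) < ∞` for a.e. `x`. -/
theorem sparse_convex_body_sum_well_defined
    {d m : ℕ} (hd : 0 < d) (hm : 0 < m) (ι : Fin m → Type*)
    [∀ j, Fintype (ι j)] [∀ j, DecidableEq (ι j)] [∀ j, Nonempty (ι j)]
    (η : ℝ) (hη0 : 0 < η) (hη1 : η < 1)
    (N : Type) [Countable N] (c : N → (Fin d → ℝ)) (L : N → ℝ) (hL : ∀ i, 0 < L i)
    (E : N → Set (Fin d → ℝ)) (hEm : ∀ i, MeasurableSet (E i))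
    (hEsub : ∀ i, E i ⊆ cube (c i) (L i))
    (hEdisj : Pairwise fun i i' => Disjoint (E i) (E i'))
    (hEbig : ∀ i, ENNReal.ofReal η * volume (cube (c i) (L i)) ≤ volume (E i))
    (F : ∀ j, (Fin d → ℝ) → Set (EuclideanSpace ℝ (ι j)))
    (hne : ∀ j x, (F j x).Nonempty) (hcp : ∀ j x, IsCompact (F j x))
    (hconv : ∀ j x, Convex ℝ (F j x)) (hsym : ∀ j x, ∀ u ∈ F j x, -u ∈ F j x)
    (hmeas : ∀ j, ∀ U : Set (EuclideanSpace ℝ (ι j)), IsOpen U →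
      MeasurableSet {x | (F j x ∩ U).Nonempty})
    (hsupp : ∀ j, ∃ R : ℝ, ∀ x : Fin d → ℝ, R < dist x 0 → F j x = {0})
    (hint : ∀ j, (∫⁻ x, ⨆ u ∈ F j x, (‖u‖₊ : ℝ≥0∞)) < ⊤) :
    ∀ᵐ x : Fin d → ℝ,
      (∑' i : N, Set.indicator (cube (c i) (L i))
        (fun _ => ∏ j, ⨆ v ∈ aumAvg (cube (c i) (L i)) (F j), (‖v‖₊ : ℝ≥0∞)) x) < ⊤ := by
  classical
  set Q : N → Set (Fin d → ℝ) := fun i => cube (c i) (L i) with hQdef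
  set g : Fin m → (Fin d → ℝ) → ℝ≥0∞ := fun j x => ⨆ u ∈ F j x, (‖u‖₊ : ℝ≥0∞) with hgdef
  set term : N → ℝ≥0∞ :=
    fun i => ∏ j, ⨆ v ∈ aumAvg (Q i) (F j), (‖v‖₊ : ℝ≥0∞) with htermdef
  suffices H : ∀ᵐ x : Fin d → ℝ, (∑' i : N, Set.indicator (Q i) (fun _ => term i) x) < ⊤ by
    simpa only [htermdef, hQdef] using H
  have hQm : ∀ i, MeasurableSet (Q i) := fun i => measurableSet_cube _ _
  have hQv : ∀ i, volume (Q i) = ENNReal.ofReal (L i) ^ d := fun i => volume_cube _ _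
  have hQpos : ∀ i, 0 < volume (Q i) := fun i => by
    rw [hQv]; exact ENNReal.pow_pos (ENNReal.ofReal_pos.mpr (hL i)) d
  -- basic bound
  have hterm_le : ∀ i, term i ≤ ∏ j, (volume (Q i))⁻¹ * ∫⁻ x in Q i, g j x := fun i =>
    Finset.prod_le_prod' fun j _ => aumAvg_norm_bound _ _
  set A : Fin m → ℝ≥0∞ := fun j => ∫⁻ x, g j x with hAdef
  have hA : ∀ j, A j < ⊤ := fun j => hint j
  have hterm_le' : ∀ i, term i ≤ ∏ j, (volume (Q i))⁻¹ * A j := fun i =>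
    (hterm_le i).trans (Finset.prod_le_prod' fun j _ =>
      mul_le_mul' le_rfl (setLIntegral_le_lintegral _ _))
  have hterm_lt : ∀ i, term i < ⊤ := fun i =>
    (hterm_le' i).trans_lt (ENNReal.prod_lt_top fun j _ =>
      ENNReal.mul_lt_top (ENNReal.inv_lt_top.mpr (hQpos i)) (hA j))
  -- support radius
  choose R hR using hsupp
  set R' : ℝ := 1 + ∑ j, |R j| with hR'def
  have hsum_nonneg : (0:ℝ) ≤ ∑ j, |R j| := Finset.sum_nonneg fun j _ => abs_nonneg _
  have hR'pos : (0:ℝ) < R' := by rw [hR'def]; linarith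
  have hRlt : ∀ j, R j < R' := by
    intro j
    have h1 : R j ≤ |R j| := le_abs_self _
    have h2 : |R j| ≤ ∑ j, |R j| :=
      Finset.single_le_sum (fun j _ => abs_nonneg (R j)) (Finset.mem_univ j)
    rw [hR'def]; linarith
  have hg0 : ∀ j x, R' ≤ dist x 0 → g j x = 0 := by
    intro j x hx
    have hF : F j x = {0} := hR j x ((hRlt j).trans_le hx)
    simp [hgdef, hF]
  -- far cubes
  have hfar : ∀ i, Disjoint (Q i) (Metric.closedBall 0 R') → term i = 0 := by
    intro i hdisj
    have hz : ∀ j, (∫⁻ x in Q i, g j x) = 0 := by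
      intro j
      have : ∫⁻ x in Q i, g j x = ∫⁻ x in Q i, 0 := by
        refine setLIntegral_congr_fun (hQm i) (fun x hx => ?_)
        refine hg0 j x (le_of_not_gt fun h => ?_)
        exact Set.disjoint_left.mp hdisj hx (Metric.mem_closedBall.mpr (by
          rw [dist_comm] at h ⊢; exact h.le))
      simpa using this
    refine le_antisymm ?_ zero_le
    refine (hterm_le i).trans ?_
    rw [Finset.prod_eq_zero (Finset.mem_univ (⟨0, hm⟩ : Fin m)) (by rw [hz]; ring)]
  -- near cubes are in a ball
  have hnear : ∀ i, ¬ Disjoint (Q i) (Metric.closedBall (0 : Fin d → ℝ) R') →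
      Q i ⊆ Metric.closedBall 0 (R' + L i) := by
    intro i hdisj z hz
    obtain ⟨y, hyQ, hyB⟩ := Set.not_disjoint_iff.mp hdisj
    have hyQ' : ∀ k, c i k ≤ y k ∧ y k ≤ c i k + L i := hyQ
    have hz' : ∀ k, c i k ≤ z k ∧ z k ≤ c i k + L i := hz
    have hzy : dist z y ≤ L i := by
      rw [dist_pi_le_iff (hL i).le]
      intro k
      rw [Real.dist_eq, abs_sub_le_iff]
      constructor
      · linarith [(hz' k).1, (hz' k).2, (hyQ' k).1, (hyQ' k).2]
      · linarith [(hz' k).1, (hz' k).2, (hyQ' k).1, (hyQ' k).2]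
    have hy0 : dist y 0 ≤ R' := Metric.mem_closedBall.mp hyB
    have : dist z 0 ≤ dist z y + dist y 0 := dist_triangle _ _ _
    rw [Metric.mem_closedBall]
    linarith
  -- weight function
  set w : (Fin d → ℝ) → ℝ≥0∞ := fun y => ENNReal.ofReal ((1 + ‖y‖) ^ (-(2 * (d:ℝ)))) with hwdef
  have hw_int : (∫⁻ y, w y) < ⊤ := by
    apply finite_integral_one_add_norm
    simp only [Module.finrank_fintype_fun_eq_card, Fintype.card_fin]
    have : (0:ℝ) < d := by exact_mod_cast hd
    linarith
  have hw_meas : Measurable w := by rw [hwdef]; fun_prop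
  set b : ℝ := 2 + R' with hbdef
  have hb1 : (1:ℝ) ≤ b := by rw [hbdef]; linarith
  have hbpos : (0:ℝ) < b := by linarith
  set c0 : ℝ≥0∞ := ENNReal.ofReal η * ENNReal.ofReal (b ^ (-(2 * (d:ℝ)))) with hc0def
  have hc0_ne : c0 ≠ 0 := by
    rw [hc0def]
    exact mul_ne_zero (ENNReal.ofReal_pos.mpr hη0).ne'
      (ENNReal.ofReal_pos.mpr (Real.rpow_pos_of_pos hbpos _)).ne'
  have hc0_top : c0 ≠ ⊤ := by
    rw [hc0def]
    exact (ENNReal.mul_lt_top ENNReal.ofReal_lt_top ENNReal.ofReal_lt_top).ne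
  set K : ℝ≥0∞ := c0⁻¹ with hKdef
  have hKlt : K < ⊤ := by
    rw [hKdef, ENNReal.inv_lt_top]
    exact pos_iff_ne_zero.mpr hc0_ne
  have hbig_key : ∀ i, ¬ Disjoint (Q i) (Metric.closedBall (0 : Fin d → ℝ) R') → 1 ≤ L i →
      (volume (Q i))⁻¹ ≤ K * ∫⁻ y in E i, w y := by
    intro i hdisj h1
    have hsub : Q i ⊆ Metric.closedBall 0 (R' + L i) := hnear i hdisj
    have hptw : ∀ y ∈ E i, ENNReal.ofReal ((b * L i) ^ (-(2*(d:ℝ)))) ≤ w y := by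
      intro y hy
      have hyb : ‖y‖ ≤ R' + L i := by
        have := hsub (hEsub i hy)
        rwa [Metric.mem_closedBall, dist_zero_right] at this
      have h1y : 1 + ‖y‖ ≤ b * L i := by
        have h2 : 1 + R' ≤ (1 + R') * L i := le_mul_of_one_le_right (by linarith) h1
        rw [hbdef]; nlinarith
      rw [hwdef]
      exact ENNReal.ofReal_le_ofReal
        (Real.rpow_le_rpow_of_nonpos (by positivity) h1y (neg_nonpos.mpr (by positivity)))
    have hlow : ENNReal.ofReal ((b * L i) ^ (-(2*(d:ℝ)))) * volume (E i) ≤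
        ∫⁻ y in E i, w y := by
      rw [← setLIntegral_const (E i) (ENNReal.ofReal ((b * L i) ^ (-(2*(d:ℝ)))))]
      exact setLIntegral_mono' (hEm i) hptw
    have hvolQ_rpow : volume (Q i) = ENNReal.ofReal (L i ^ (d:ℝ)) := by
      rw [hQv i, ← ENNReal.ofReal_pow (hL i).le, Real.rpow_natCast]
    have hinv : (volume (Q i))⁻¹ = ENNReal.ofReal (L i ^ (-(d:ℝ))) := by
      rw [hvolQ_rpow, ← ENNReal.ofReal_inv_of_pos (Real.rpow_pos_of_pos (hL i) _),
        ← Real.rpow_neg (hL i).le]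
    have hC_eq : ENNReal.ofReal ((b * L i) ^ (-(2*(d:ℝ)))) * volume (Q i)
        = ENNReal.ofReal (b ^ (-(2*(d:ℝ)))) * ENNReal.ofReal (L i ^ (-(d:ℝ))) := by
      rw [Real.mul_rpow hbpos.le (hL i).le, hvolQ_rpow,
        ← ENNReal.ofReal_mul (by positivity), ← ENNReal.ofReal_mul (by positivity)]
      congr 1
      rw [mul_assoc, ← Real.rpow_add (hL i), show -(2*(d:ℝ)) + d = -(d:ℝ) by ring]
    have h3 : c0 * (volume (Q i))⁻¹ ≤ ∫⁻ y in E i, w y := by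
      calc c0 * (volume (Q i))⁻¹
          = ENNReal.ofReal η *
            (ENNReal.ofReal (b ^ (-(2*(d:ℝ)))) * ENNReal.ofReal (L i ^ (-(d:ℝ)))) := by
            rw [hinv, hc0def]; ring
        _ = ENNReal.ofReal ((b * L i) ^ (-(2*(d:ℝ)))) *
            (ENNReal.ofReal η * volume (Q i)) := by rw [← hC_eq]; ring
        _ ≤ ENNReal.ofReal ((b * L i) ^ (-(2*(d:ℝ)))) * volume (E i) :=
            mul_le_mul' le_rfl (hEbig i)
        _ ≤ ∫⁻ y in E i, w y := hlow
    calc (volume (Q i))⁻¹ = c0⁻¹ * (c0 * (volume (Q i))⁻¹) := by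
          rw [← mul_assoc, ENNReal.inv_mul_cancel hc0_ne hc0_top, one_mul]
      _ ≤ K * ∫⁻ y in E i, w y := mul_le_mul' le_rfl h3
  -- the big-cube part of the sum is uniformly finite
  set P : ℝ≥0∞ := ∏ j, A j with hPdef
  have hP : P < ⊤ := ENNReal.prod_lt_top fun j _ => hA j
  have hterm_big : ∀ i, ¬ Disjoint (Q i) (Metric.closedBall (0 : Fin d → ℝ) R') → 1 ≤ L i →
      term i ≤ P * K * ∫⁻ y in E i, w y := by
    intro i hdisj h1
    have h2 : term i ≤ (volume (Q i))⁻¹ ^ m * P := by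
      refine (hterm_le' i).trans ?_
      rw [Finset.prod_mul_distrib, Finset.prod_const, Finset.card_univ, Fintype.card_fin, hPdef]
    have hv1 : 1 ≤ volume (Q i) := by
      rw [hQv i]
      exact one_le_pow_of_one_le' (ENNReal.one_le_ofReal.mpr h1) d
    have h4 : (volume (Q i))⁻¹ ^ m ≤ (volume (Q i))⁻¹ :=
      pow_le_of_le_one zero_le (ENNReal.inv_le_one.mpr hv1) hm.ne'
    calc term i ≤ (volume (Q i))⁻¹ * P := le_trans h2 (mul_le_mul' h4 le_rfl)
      _ ≤ (K * ∫⁻ y in E i, w y) * P := mul_le_mul' (hbig_key i hdisj h1) le_rfl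
      _ = P * K * ∫⁻ y in E i, w y := by ring
  have hbigsum : (∑' i : N, if (¬ Disjoint (Q i) (Metric.closedBall (0:Fin d → ℝ) R') ∧ 1 ≤ L i)
      then term i else 0) < ⊤ := by
    set E2 : N → Set (Fin d → ℝ) := fun i =>
      if (¬ Disjoint (Q i) (Metric.closedBall (0:Fin d → ℝ) R') ∧ 1 ≤ L i) then E i else ∅
      with hE2def
    have hE2m : ∀ i, MeasurableSet (E2 i) := fun i => by
      rw [hE2def]; dsimp only; split
      · exact hEm i
      · exact MeasurableSet.empty
    have hE2d : Pairwise (Function.onFun Disjoint E2) := fun i i' hne' => by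
      refine Disjoint.mono ?_ ?_ (hEdisj hne') <;>
        (rw [hE2def]; dsimp only; split <;> simp)
    have hle : ∀ i, (if (¬ Disjoint (Q i) (Metric.closedBall (0:Fin d → ℝ) R') ∧ 1 ≤ L i)
        then term i else 0) ≤ P * K * ∫⁻ y in E2 i, w y := by
      intro i
      rw [hE2def]; dsimp only; split
      · next h => exact hterm_big i h.1 h.2
      · simp
    calc (∑' i : N, if (¬ Disjoint (Q i) (Metric.closedBall (0:Fin d → ℝ) R') ∧ 1 ≤ L i)
          then term i else 0)
        ≤ ∑' i : N, P * K * ∫⁻ y in E2 i, w y := ENNReal.tsum_le_tsum hle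
      _ = P * K * ∑' i : N, ∫⁻ y in E2 i, w y := ENNReal.tsum_mul_left
      _ = P * K * ∫⁻ y in ⋃ i, E2 i, w y := by rw [lintegral_iUnion hE2m hE2d]
      _ ≤ P * K * ∫⁻ y, w y := mul_le_mul' le_rfl (setLIntegral_le_lintegral _ _)
      _ < ⊤ := ENNReal.mul_lt_top (ENNReal.mul_lt_top hP hKlt) hw_int
  -- the small-cube counting function
  set Sm : N → Prop := fun i =>
    ¬ Disjoint (Q i) (Metric.closedBall (0:Fin d → ℝ) R') ∧ L i < 1 with hSmdef
  set Q2 : N → Set (Fin d → ℝ) := fun i => if Sm i then Q i else ∅ with hQ2def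
  have hQ2m : ∀ i, MeasurableSet (Q2 i) := fun i => by
    rw [hQ2def]; dsimp only; split
    · exact hQm i
    · exact MeasurableSet.empty
  have hΦmeas : Measurable (fun x => ∑' i : N, Set.indicator (Q2 i) (fun _ => (1:ℝ≥0∞)) x) :=
    Measurable.ennreal_tsum fun i => measurable_const.indicator (hQ2m i)
  have hΦint : (∫⁻ x, ∑' i : N, Set.indicator (Q2 i) (fun _ => (1:ℝ≥0∞)) x) < ⊤ := by
    rw [lintegral_tsum fun i => (measurable_const.indicator (hQ2m i)).aemeasurable]
    set E3 : N → Set (Fin d → ℝ) := fun i => if Sm i then E i else ∅ with hE3def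
    have hE3m : ∀ i, MeasurableSet (E3 i) := fun i => by
      rw [hE3def]; dsimp only; split
      · exact hEm i
      · exact MeasurableSet.empty
    have hE3d : Pairwise (Function.onFun Disjoint E3) := fun i i' hne' => by
      refine Disjoint.mono ?_ ?_ (hEdisj hne') <;>
        (rw [hE3def]; dsimp only; split <;> simp)
    have hη_ne : ENNReal.ofReal η ≠ 0 := (ENNReal.ofReal_pos.mpr hη0).ne'
    have hη_top : ENNReal.ofReal η ≠ ⊤ := ENNReal.ofReal_ne_top
    have hQ2E : ∀ i, volume (Q2 i) ≤ (ENNReal.ofReal η)⁻¹ * volume (E3 i) := by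
      intro i
      rw [hQ2def, hE3def]; dsimp only; split
      · calc volume (Q i) = (ENNReal.ofReal η)⁻¹ * (ENNReal.ofReal η * volume (Q i)) := by
              rw [← mul_assoc, ENNReal.inv_mul_cancel hη_ne hη_top, one_mul]
          _ ≤ (ENNReal.ofReal η)⁻¹ * volume (E i) := mul_le_mul' le_rfl (hEbig i)
      · simp
    have hE3sub : (⋃ i, E3 i) ⊆ Metric.closedBall (0:Fin d → ℝ) (R' + 1) := by
      refine Set.iUnion_subset fun i => ?_
      rw [hE3def]; dsimp only; split
      · next h =>
        refine (hEsub i).trans ((hnear i h.1).trans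
          (Metric.closedBall_subset_closedBall (by linarith [h.2])))
      · simp
    calc (∑' i : N, ∫⁻ x, Set.indicator (Q2 i) (fun _ => (1:ℝ≥0∞)) x)
        = ∑' i : N, volume (Q2 i) := by
          refine tsum_congr fun i => ?_
          rw [lintegral_indicator (hQ2m i)]
          simp
      _ ≤ ∑' i : N, (ENNReal.ofReal η)⁻¹ * volume (E3 i) := ENNReal.tsum_le_tsum hQ2E
      _ = (ENNReal.ofReal η)⁻¹ * ∑' i : N, volume (E3 i) := ENNReal.tsum_mul_left
      _ = (ENNReal.ofReal η)⁻¹ * volume (⋃ i, E3 i) := by rw [measure_iUnion hE3d hE3m]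
      _ ≤ (ENNReal.ofReal η)⁻¹ * volume (Metric.closedBall (0:Fin d → ℝ) (R' + 1)) :=
          mul_le_mul' le_rfl (measure_mono hE3sub)
      _ < ⊤ := ENNReal.mul_lt_top
          (ENNReal.inv_lt_top.mpr (pos_iff_ne_zero.mpr hη_ne))
          (measure_closedBall_lt_top)
  have hae : ∀ᵐ x : Fin d → ℝ,
      (∑' i : N, Set.indicator (Q2 i) (fun _ => (1:ℝ≥0∞)) x) < ⊤ :=
    ae_lt_top hΦmeas hΦint.ne
  -- conclusion
  filter_upwards [hae] with x hx
  have hfin : {i : N | Sm i ∧ x ∈ Q i}.Finite := by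
    by_contra hinf
    haveI := (show Set.Infinite {i : N | Sm i ∧ x ∈ Q i} from hinf).to_subtype
    have h1 : (⊤ : ℝ≥0∞) = ∑' _s : {i : N | Sm i ∧ x ∈ Q i}, (1:ℝ≥0∞) :=
      (ENNReal.tsum_const_eq_top_of_ne_zero one_ne_zero).symm
    have h3 : ∀ s : {i : N | Sm i ∧ x ∈ Q i},
        Set.indicator (Q2 s.1) (fun _ => (1:ℝ≥0∞)) x = 1 := by
      intro s
      have hs := s.2
      rw [hQ2def]; dsimp only
      rw [if_pos hs.1]
      exact Set.indicator_of_mem hs.2 _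
    have h2 : (∑' s : {i : N | Sm i ∧ x ∈ Q i},
          Set.indicator (Q2 s.1) (fun _ => (1:ℝ≥0∞)) x)
        ≤ ∑' i : N, Set.indicator (Q2 i) (fun _ => (1:ℝ≥0∞)) x :=
      ENNReal.tsum_comp_le_tsum_of_injective Subtype.val_injective _
    rw [tsum_congr h3, ← h1] at h2
    exact hx.ne (top_le_iff.mp h2)
  have hpt : ∀ i : N, Set.indicator (Q i) (fun _ => term i) x ≤
      (if (¬ Disjoint (Q i) (Metric.closedBall (0:Fin d → ℝ) R') ∧ 1 ≤ L i)
        then term i else 0) + (if (Sm i ∧ x ∈ Q i) then term i else 0) := by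
    intro i
    by_cases hxQ : x ∈ Q i
    · rw [Set.indicator_of_mem hxQ]
      by_cases hdisj : Disjoint (Q i) (Metric.closedBall (0:Fin d → ℝ) R')
      · rw [hfar i hdisj]; exact zero_le
      · by_cases h1 : 1 ≤ L i
        · rw [if_pos ⟨hdisj, h1⟩]; exact le_self_add
        · rw [if_pos (show Sm i ∧ x ∈ Q i from ⟨⟨hdisj, not_le.mp h1⟩, hxQ⟩)]
          exact le_add_self
    · rw [Set.indicator_of_notMem hxQ]; exact zero_le
  have hsmalllt : (∑' i : N, if (Sm i ∧ x ∈ Q i) then term i else 0) < ⊤ := by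
    rw [tsum_eq_sum (s := hfin.toFinset)
      (fun i hi => by rw [if_neg]; simpa [Set.Finite.mem_toFinset] using hi)]
    refine ENNReal.sum_lt_top.mpr fun i _ => ?_
    split
    · exact hterm_lt i
    · exact ENNReal.zero_lt_top
  calc (∑' i : N, Set.indicator (Q i) (fun _ => term i) x)
      ≤ ∑' i : N, ((if (¬ Disjoint (Q i) (Metric.closedBall (0:Fin d → ℝ) R') ∧ 1 ≤ L i)
          then term i else 0) + (if (Sm i ∧ x ∈ Q i) then term i else 0)) :=
        ENNReal.tsum_le_tsum hpt
    _ = (∑' i : N, if (¬ Disjoint (Q i) (Metric.closedBall (0:Fin d → ℝ) R') ∧ 1 ≤ L i)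
          then term i else 0) + ∑' i : N, (if (Sm i ∧ x ∈ Q i) then term i else 0) :=
        ENNReal.tsum_add
    _ < ⊤ := ENNReal.add_lt_top.mpr ⟨hbigsum, hsmalllt⟩
end
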